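/- Under the grounded Laplacian setup with n ≥ 2, let 0 < ε < 1/2, 1/2 < η < 1, and δ₂ = (1−η)ε/(n²√(6(n²−1))). Let p̃ = L_F^{-1}b and suppose p ∈ ℝ^F satisfies ‖p − p̃‖_{L_F} ≤ δ₂ ‖p̃‖_{L_F}. Then for every i ∈ F with p̃_i ≤ η: (1 − ε/6)(1 − p̃_i) ≤ 1 − p_i ≤ (1 + ε/6)(1 − p̃_i); that is, 1 − p_i is an (ε/6)-approximation of 1 − e_iᵀ L_F^{-1} b. -/

import Mathlib

open Matrix Finset


lemma walk_sq_le {V : Type} (G : SimpleGraph V) (x : V → ℝ) :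
    ∀ {u v : V} (w : G.Walk u v),
      (x u - x v) ^ 2 ≤ (w.length : ℝ) *
        ((w.darts.map (fun d => (x d.fst - x d.snd) ^ 2)).sum) := by
  intro u v w
  induction w with
  | nil => simp
  | @cons u a v h w ih =>
    simp only [SimpleGraph.Walk.darts_cons, List.map_cons, List.sum_cons,
      SimpleGraph.Walk.length_cons]
    set L : ℝ := (w.length : ℝ) with hL
    set Q : ℝ := (w.darts.map (fun d => (x d.fst - x d.snd) ^ 2)).sum with hQ
    have hQ0 : 0 ≤ Q := by
      apply List.sum_nonneg
      intro q hq
      simp only [List.mem_map] at hq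
      obtain ⟨d, _, rfl⟩ := hq
      positivity
    have key : (x a - x v) ^ 2 ≤ L * Q := ih
    push_cast
    rcases Nat.eq_zero_or_pos w.length with h0 | hpos
    · have : w.length = 0 := h0
      have hnil : x a - x v = 0 := by
        have := w.eq_of_length_eq_zero this
        rw [this]; ring
      have hx : x u - x v = x u - x a := by
        have : x a = x v := by linarith [sub_eq_zero.mp hnil]
        rw [this]
      rw [hx]
      nlinarith [sq_nonneg (x u - x a)]
    · have hL1 : (1 : ℝ) ≤ L := by rw [hL]; exact_mod_cast hpos
      have expand : x u - x v = (x u - x a) + (x a - x v) := by ring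
      rw [expand]
      nlinarith [sq_nonneg (L * (x u - x a) - (x a - x v)), mul_nonneg (by linarith : (0:ℝ) ≤ L + 1) (by linarith : (0:ℝ) ≤ L * Q - (x a - x v)^2)]

lemma darts_sum_le {V : Type} [Fintype V] [DecidableEq V] (G : SimpleGraph V)
    [DecidableRel G.Adj] (x : V → ℝ) {u v : V} (w : G.Walk u v)
    (hw : w.darts.Nodup) :
    ((w.darts.map (fun d => (x d.fst - x d.snd) ^ 2)).sum) ≤
      ∑ i : V, ∑ j : V, if G.Adj i j then (x i - x j) ^ 2 else 0 := by
  classical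
  set g : V × V → ℝ := fun q => if G.Adj q.1 q.2 then (x q.1 - x q.2) ^ 2 else 0 with hg
  have hinj : Function.Injective (SimpleGraph.Dart.toProd (G := G)) := by
    intro d1 d2 h; exact SimpleGraph.Dart.ext _ _ h
  have hnodup : (w.darts.map SimpleGraph.Dart.toProd).Nodup := hw.map hinj
  have h1 : ((w.darts.map (fun d => (x d.fst - x d.snd) ^ 2)).sum)
      = ∑ q ∈ (w.darts.map SimpleGraph.Dart.toProd).toFinset, g q := by
    rw [List.sum_toFinset _ hnodup]
    rw [List.map_map]
    congr 1
    apply List.map_congr_left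
    intro d hd
    simp only [hg, Function.comp]
    rw [if_pos d.adj]
  rw [h1]
  have h2 : ∑ q ∈ (univ : Finset V) ×ˢ (univ : Finset V), g q
      = ∑ i : V, ∑ j : V, if G.Adj i j then (x i - x j) ^ 2 else 0 := by
    rw [Finset.sum_product]
  rw [← h2]
  apply Finset.sum_le_sum_of_subset_of_nonneg
  · intro q _; simp
  · intro q _ _
    simp only [hg]
    split <;> positivity

lemma quad_transfer {V : Type} [Fintype V] [DecidableEq V] (M : Matrix V V ℝ)
    (F : Finset V) (y : F → ℝ) :
    y ⬝ᵥ ((M.submatrix (fun i : F => (i : V)) (fun i : F => (i : V))) *ᵥ y)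
      = (fun v => if h : v ∈ F then y ⟨v, h⟩ else 0) ⬝ᵥ
          (M *ᵥ (fun v => if h : v ∈ F then y ⟨v, h⟩ else 0)) := by
  classical
  set z : V → ℝ := fun v => if h : v ∈ F then y ⟨v, h⟩ else 0 with hz
  have hy : ∀ i : F, y i = z (i : V) := by
    intro i; simp [hz, i.2]
  have hz0 : ∀ v : V, v ∉ F → z v = 0 := by intro v hv; simp [hz, hv]
  simp only [dotProduct, mulVec, submatrix_apply]
  calc ∑ i : F, y i * ∑ j : F, M (i : V) (j : V) * y j
      = ∑ i : F, z (i : V) * ∑ j : F, M (i : V) (j : V) * z (j : V) := by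
        simp_rw [hy]
    _ = ∑ i ∈ F, z i * ∑ j ∈ F, M i j * z j := by
        rw [← Finset.sum_coe_sort F (fun i => z i * ∑ j ∈ F, M i j * z j)]
        congr 1; ext i
        rw [← Finset.sum_coe_sort F (fun j => M (i : V) j * z j)]
    _ = ∑ i ∈ F, z i * ∑ j : V, M i j * z j := by
        apply Finset.sum_congr rfl
        intro i _
        congr 1
        rw [Finset.sum_subset (Finset.subset_univ F)]
        intro v _ hv
        rw [hz0 v hv, mul_zero]
    _ = ∑ i : V, z i * ∑ j : V, M i j * z j := by
        rw [Finset.sum_subset (Finset.subset_univ F)]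
        intro v _ hv
        rw [hz0 v hv, zero_mul]

lemma pointwise_bound {V : Type} [Fintype V] [DecidableEq V] (G : SimpleGraph V)
    [DecidableRel G.Adj] (hconn : G.Connected) (F : Finset V) (s : V) (hs : s ∉ F)
    (y : F → ℝ) (i : F) :
    (y i) ^ 2 ≤ 2 * ((Fintype.card V : ℝ) - 1) *
      (y ⬝ᵥ (((G.lapMatrix ℝ).submatrix (fun i : F => (i : V)) (fun i : F => (i : V))) *ᵥ y)) := by
  classical
  set z : V → ℝ := fun v => if h : v ∈ F then y ⟨v, h⟩ else 0 with hz
  have hq : y ⬝ᵥ (((G.lapMatrix ℝ).submatrix (fun i : F => (i : V)) (fun i : F => (i : V))) *ᵥ y)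
      = z ⬝ᵥ (G.lapMatrix ℝ *ᵥ z) := quad_transfer (G.lapMatrix ℝ) F y
  have hS : (∑ a : V, ∑ c : V, if G.Adj a c then (z a - z c) ^ 2 else 0)
      = 2 * (z ⬝ᵥ (G.lapMatrix ℝ *ᵥ z)) := by
    have h1 := SimpleGraph.lapMatrix_toLinearMap₂' ℝ G z
    rw [Matrix.toLinearMap₂'_apply'] at h1
    rw [h1]; ring
  obtain ⟨w⟩ := hconn.preconnected (i : V) s
  set pw := w.bypass with hpw
  have hpath : pw.IsPath := w.bypass_isPath
  have hlen : pw.length < Fintype.card V := hpath.length_lt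
  have hnodup : pw.darts.Nodup := by
    have he : pw.edges.Nodup := hpath.isTrail.edges_nodup
    rw [SimpleGraph.Walk.edges] at he
    exact he.of_map _
  have h1 : (z (i : V) - z s) ^ 2 ≤ (pw.length : ℝ) *
      ((pw.darts.map (fun d => (z d.fst - z d.snd) ^ 2)).sum) := walk_sq_le G z pw
  have h2 := darts_sum_le G z pw hnodup
  have hds0 : 0 ≤ ((pw.darts.map (fun d => (z d.fst - z d.snd) ^ 2)).sum) := by
    apply List.sum_nonneg
    intro q hq'
    obtain ⟨d, _, rfl⟩ := List.mem_map.mp hq'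
    positivity
  have hzi : z (i : V) = y i := by simp [hz, i.2]
  have hzs : z s = 0 := by simp [hz, hs]
  have hcard : (pw.length : ℝ) ≤ (Fintype.card V : ℝ) - 1 := by
    have h' : pw.length + 1 ≤ Fintype.card V := hlen
    have h'' : ((pw.length : ℝ) + 1) ≤ (Fintype.card V : ℝ) := by exact_mod_cast h'
    linarith
  have hc0 : (0:ℝ) ≤ (Fintype.card V : ℝ) - 1 := by
    have h' : 1 ≤ Fintype.card V := Fintype.card_pos_iff.mpr ⟨s⟩
    have h'' : (1:ℝ) ≤ (Fintype.card V : ℝ) := by exact_mod_cast h'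
    linarith
  calc (y i) ^ 2 = (z (i : V) - z s) ^ 2 := by rw [hzi, hzs]; ring_nf
    _ ≤ (pw.length : ℝ) * ((pw.darts.map (fun d => (z d.fst - z d.snd) ^ 2)).sum) := h1
    _ ≤ ((Fintype.card V : ℝ) - 1) * ((pw.darts.map (fun d => (z d.fst - z d.snd) ^ 2)).sum) :=
        mul_le_mul_of_nonneg_right hcard hds0
    _ ≤ ((Fintype.card V : ℝ) - 1) * (∑ a : V, ∑ c : V, if G.Adj a c then (z a - z c) ^ 2 else 0) :=
        mul_le_mul_of_nonneg_left h2 hc0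
    _ = 2 * ((Fintype.card V : ℝ) - 1) * (z ⬝ᵥ (G.lapMatrix ℝ *ᵥ z)) := by rw [hS]; ring
    _ = 2 * ((Fintype.card V : ℝ) - 1) *
      (y ⬝ᵥ (((G.lapMatrix ℝ).submatrix (fun i : F => (i : V)) (fun i : F => (i : V))) *ᵥ y)) := by
        rw [hq]


set_option maxHeartbeats 1000000 in
/-- Under the grounded Laplacian setup with `n ≥ 2`, let `0 < ε < 1/2`, `1/2 < η < 1`, and
`δ₂ = (1−η)ε/(n²√(6(n²−1)))`.  Let `p̃ = L_F⁻¹ b` and suppose `p` satisfies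
`‖p − p̃‖_{L_F} ≤ δ₂ ‖p̃‖_{L_F}`.  Then for every `i ∈ F` with `p̃ᵢ ≤ η`:
`(1 − ε/6)(1 − p̃ᵢ) ≤ 1 − pᵢ ≤ (1 + ε/6)(1 − p̃ᵢ)`, i.e. `1 − pᵢ` is an
`(ε/6)`-approximation of `1 − eᵢᵀ L_F⁻¹ b`. -/
theorem stmt12 {V : Type} [Fintype V] [DecidableEq V]
    (G : SimpleGraph V) [DecidableRel G.Adj] (hconn : G.Connected)
    (F S0 S1 : Finset V)
    (hFne : F.Nonempty) (hS1ne : S1.Nonempty)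
    (hFS0 : Disjoint F S0) (hFS1 : Disjoint F S1) (hS0S1 : Disjoint S0 S1)
    (hcover : F ∪ S0 ∪ S1 = Finset.univ)
    (n : ℕ) (hn : n = Fintype.card V) (hn2 : 2 ≤ n)
    (LF : Matrix F F ℝ)
    (hLF : LF = (G.lapMatrix ℝ).submatrix (fun i : F => (i : V)) (fun i : F => (i : V)))
    (hPD : LF.PosDef) (hnn : ∀ i j : F, 0 ≤ LF⁻¹ i j)
    (b : F → ℝ)
    (hb : ∀ i : F, b i = ((S1.filter fun a => G.Adj a (i : V)).card : ℝ))
    (ε : ℝ) (hε0 : 0 < ε) (hε : ε < 1 / 2)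
    (η : ℝ) (hη0 : 1 / 2 < η) (hη1 : η < 1)
    (δ₂ : ℝ) (hδ₂ : δ₂ = (1 - η) * ε / ((n : ℝ) ^ 2 * Real.sqrt (6 * ((n : ℝ) ^ 2 - 1))))
    (pt : F → ℝ) (hpt : pt = LF⁻¹ *ᵥ b)
    (p : F → ℝ)
    (hsolve : Real.sqrt ((p - pt) ⬝ᵥ (LF *ᵥ (p - pt)))
        ≤ δ₂ * Real.sqrt (pt ⬝ᵥ (LF *ᵥ pt))) :
    ∀ i : F, pt i ≤ η →
      (1 - ε / 6) * (1 - pt i) ≤ 1 - p i ∧ 1 - p i ≤ (1 + ε / 6) * (1 - pt i) := by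
  classical
  set m : ℝ := (n : ℝ) with hm
  have hm2 : (2:ℝ) ≤ m := by rw [hm]; exact_mod_cast hn2
  -- invertibility facts
  have hdet : IsUnit LF.det := (Matrix.isUnit_iff_isUnit_det LF).mp hPD.isUnit
  have hLFmul : LF * LF⁻¹ = 1 := Matrix.mul_nonsing_inv LF hdet
  have hmulLF : LF⁻¹ * LF = 1 := Matrix.nonsing_inv_mul LF hdet
  have hLFpt : LF *ᵥ pt = b := by
    rw [hpt, Matrix.mulVec_mulVec, hLFmul, Matrix.one_mulVec]
  have hb0 : ∀ i : F, 0 ≤ b i := by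
    intro i; rw [hb i]; positivity
  have hpt0 : ∀ i : F, 0 ≤ pt i := by
    intro i
    rw [hpt]
    apply Finset.sum_nonneg
    intro j _
    exact mul_nonneg (hnn i j) (hb0 j)
  -- row sums of LF dominate b
  have hc : ∀ j : F, b j ≤ (LF *ᵥ fun _ => (1:ℝ)) j := by
    intro j
    have hcj : (LF *ᵥ fun _ => (1:ℝ)) j
        = ∑ k ∈ univ \ F, (if G.Adj (j : V) k then (1:ℝ) else 0) := by
      simp only [mulVec, dotProduct, mul_one, hLF, submatrix_apply]
      rw [Finset.sum_coe_sort F (fun k => G.lapMatrix ℝ (j : V) k)]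
      have hrow : ∑ k : V, G.lapMatrix ℝ (j : V) k = 0 := by
        have h0 := congrFun (SimpleGraph.lapMatrix_mulVec_const_eq_zero (R := ℝ) G) (j : V)
        simpa [mulVec, dotProduct] using h0
      have hsplit := Finset.sum_sdiff (Finset.subset_univ F)
        (f := fun k => G.lapMatrix ℝ (j : V) k)
      have hoff : ∑ k ∈ univ \ F, G.lapMatrix ℝ (j : V) k
          = ∑ k ∈ univ \ F, -(if G.Adj (j : V) k then (1:ℝ) else 0) := by
        apply Finset.sum_congr rfl
        intro k hk
        have hkF : k ∉ F := (Finset.mem_sdiff.mp hk).2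
        have hne : (j : V) ≠ k := by
          rintro rfl; exact hkF j.2
        simp [SimpleGraph.lapMatrix, SimpleGraph.degMatrix, Matrix.sub_apply,
          Matrix.diagonal_apply_ne _ hne]
      rw [hoff] at hsplit
      rw [hrow] at hsplit
      rw [Finset.sum_neg_distrib] at hsplit
      linarith
    rw [hcj, hb j]
    have hbsum : ((S1.filter fun a => G.Adj a (j : V)).card : ℝ)
        = ∑ k ∈ S1, (if G.Adj (j : V) k then (1:ℝ) else 0) := by
      rw [Finset.card_filter]
      push_cast
      apply Finset.sum_congr rfl
      intro k _
      by_cases h : G.Adj k (j : V)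
      · rw [if_pos h, if_pos ((G.adj_comm (j:V) k).mpr h)]
      · rw [if_neg h, if_neg (fun h' => h ((G.adj_comm (j:V) k).mp h'))]
    rw [hbsum]
    apply Finset.sum_le_sum_of_subset_of_nonneg
    · intro k hk
      rw [Finset.mem_sdiff]
      exact ⟨Finset.mem_univ k, fun hkF => (Finset.disjoint_left.mp hFS1) hkF hk⟩
    · intro k _ _
      positivity
  -- pt ≤ 1
  have hpt1 : ∀ i : F, pt i ≤ 1 := by
    intro i
    have hone : LF⁻¹ *ᵥ (LF *ᵥ fun _ => (1:ℝ)) = fun _ => (1:ℝ) := by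
      rw [Matrix.mulVec_mulVec, hmulLF, Matrix.one_mulVec]
    have key : ∑ k : F, LF⁻¹ i k * ((LF *ᵥ fun _ => (1:ℝ)) k - b k) = 1 - pt i := by
      have h1 : ∑ k : F, LF⁻¹ i k * (LF *ᵥ fun _ => (1:ℝ)) k = (1:ℝ) := by
        have := congrFun hone i
        simpa [mulVec, dotProduct] using this
      have h2 : ∑ k : F, LF⁻¹ i k * b k = pt i := by
        rw [hpt]; rfl
      simp_rw [mul_sub]
      rw [Finset.sum_sub_distrib, h1, h2]
    have : 0 ≤ 1 - pt i := by
      rw [← key]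
      apply Finset.sum_nonneg
      intro k _
      exact mul_nonneg (hnn i k) (by linarith [hc k])
    linarith
  -- norm of pt bound
  have hcardF : 1 ≤ F.card := Finset.Nonempty.card_pos hFne
  have hcardS1 : 1 ≤ S1.card := Finset.Nonempty.card_pos hS1ne
  have hcardFS1 : F.card + S1.card ≤ n := by
    rw [hn, ← Finset.card_univ]
    rw [← Finset.card_union_of_disjoint hFS1]
    exact Finset.card_le_card (Finset.subset_univ _)
  have hble : ∀ i : F, b i ≤ m - 1 := by
    intro i
    rw [hb i]
    have h1 : (S1.filter fun a => G.Adj a (i : V)).card ≤ S1.card :=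
      Finset.card_filter_le _ _
    have h2 : S1.card ≤ n - 1 := by omega
    have : ((S1.filter fun a => G.Adj a (i : V)).card : ℝ) ≤ ((n - 1 : ℕ) : ℝ) := by
      exact_mod_cast le_trans h1 h2
    calc ((S1.filter fun a => G.Adj a (i : V)).card : ℝ) ≤ ((n - 1 : ℕ) : ℝ) := this
      _ ≤ m - 1 := by
          rw [hm]
          have : (1:ℕ) ≤ n := by omega
          push_cast [Nat.cast_sub this]
          linarith
  have hBle : pt ⬝ᵥ b ≤ (m - 1) ^ 2 := by
    have h1 : pt ⬝ᵥ b ≤ ∑ i : F, b i := by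
      rw [dotProduct]
      apply Finset.sum_le_sum
      intro i _
      nlinarith [hpt0 i, hpt1 i, hb0 i]
    have h2 : ∑ i : F, b i ≤ (F.card : ℝ) * (m - 1) := by
      have := Finset.sum_le_card_nsmul (univ : Finset F) b (m - 1)
        (fun i _ => hble i)
      simpa [Fintype.card_coe, nsmul_eq_mul] using this
    have h3 : (F.card : ℝ) ≤ m - 1 := by
      rw [hm]
      have : F.card + 1 ≤ n := by omega
      have := (Nat.cast_le (α := ℝ)).mpr this
      push_cast at this
      linarith
    have hm1 : (0:ℝ) ≤ m - 1 := by linarith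
    have h4 := mul_le_mul_of_nonneg_right h3 hm1
    nlinarith
    -- quadratic form quantities
  obtain ⟨s, hsS1⟩ := hS1ne
  have hsF : s ∉ F := fun hsF => (Finset.disjoint_left.mp hFS1) hsF hsS1
  have hA0 : 0 ≤ (p - pt) ⬝ᵥ (LF *ᵥ (p - pt)) := by
    have := hPD.posSemidef.dotProduct_mulVec_nonneg (p - pt)
    simpa using this
  have hB0 : 0 ≤ pt ⬝ᵥ (LF *ᵥ pt) := by
    have := hPD.posSemidef.dotProduct_mulVec_nonneg pt
    simpa using this
  have hBB : pt ⬝ᵥ (LF *ᵥ pt) = pt ⬝ᵥ b := by rw [hLFpt]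
  have h61 : (0:ℝ) < 6 * (m ^ 2 - 1) := by nlinarith
  have hsq6 : Real.sqrt (6 * (m ^ 2 - 1)) ^ 2 = 6 * (m ^ 2 - 1) := Real.sq_sqrt h61.le
  have hsqrtpos : 0 < Real.sqrt (6 * (m ^ 2 - 1)) := Real.sqrt_pos.mpr h61
  have hδpos : 0 < δ₂ := by
    rw [hδ₂]
    apply div_pos (by nlinarith) (mul_pos (by nlinarith) hsqrtpos)
  have hAB : (p - pt) ⬝ᵥ (LF *ᵥ (p - pt)) ≤ δ₂ ^ 2 * (pt ⬝ᵥ (LF *ᵥ pt)) := by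
    have h := mul_self_le_mul_self (Real.sqrt_nonneg _) hsolve
    rw [Real.mul_self_sqrt hA0] at h
    calc (p - pt) ⬝ᵥ (LF *ᵥ (p - pt))
        ≤ (δ₂ * Real.sqrt (pt ⬝ᵥ (LF *ᵥ pt))) * (δ₂ * Real.sqrt (pt ⬝ᵥ (LF *ᵥ pt))) := h
      _ = δ₂ ^ 2 * (Real.sqrt (pt ⬝ᵥ (LF *ᵥ pt)) * Real.sqrt (pt ⬝ᵥ (LF *ᵥ pt))) := by ring
      _ = δ₂ ^ 2 * (pt ⬝ᵥ (LF *ᵥ pt)) := by rw [Real.mul_self_sqrt hB0]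
  have hδsq : δ₂ ^ 2 = ((1 - η) * ε) ^ 2 / (m ^ 4 * (6 * (m ^ 2 - 1))) := by
    rw [hδ₂, div_pow, mul_pow, mul_pow, hsq6]
    congr 1
    ring
  intro i hi
  have hpb := pointwise_bound G hconn F s hsF (p - pt) i
  rw [← hLF] at hpb
  have hcardm : ((Fintype.card V : ℕ) : ℝ) = m := by rw [hm, hn]
  rw [hcardm] at hpb
  have hpi : (p - pt) i = p i - pt i := rfl
  rw [hpi] at hpb
  have hm10 : (0:ℝ) ≤ m - 1 := by linarith
  have chain : (p i - pt i) ^ 2 ≤ 2 * (m - 1) ^ 3 * δ₂ ^ 2 := by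
    calc (p i - pt i) ^ 2
        ≤ 2 * (m - 1) * ((p - pt) ⬝ᵥ (LF *ᵥ (p - pt))) := hpb
      _ ≤ 2 * (m - 1) * (δ₂ ^ 2 * (pt ⬝ᵥ (LF *ᵥ pt))) := by
          apply mul_le_mul_of_nonneg_left hAB (by linarith)
      _ ≤ 2 * (m - 1) * (δ₂ ^ 2 * (m - 1) ^ 2) := by
          apply mul_le_mul_of_nonneg_left _ (by linarith)
          apply mul_le_mul_of_nonneg_left _ (by positivity)
          rw [hBB]; exact hBle
      _ = 2 * (m - 1) ^ 3 * δ₂ ^ 2 := by ring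
  have hεη0 : (0:ℝ) ≤ ε / 6 * (1 - η) := mul_nonneg (by linarith) (by linarith)
  have hfin : (p i - pt i) ^ 2 ≤ (ε / 6 * (1 - η)) ^ 2 := by
    refine le_trans chain ?_
    rw [hδsq]
    rw [show 2 * (m - 1) ^ 3 * (((1 - η) * ε) ^ 2 / (m ^ 4 * (6 * (m ^ 2 - 1))))
        = (2 * (m - 1) ^ 3 * ((1 - η) * ε) ^ 2) / (m ^ 4 * (6 * (m ^ 2 - 1))) from by ring]
    rw [div_le_iff₀ (by positivity)]
    have hpoly : 72 * (m - 1) ^ 3 ≤ m ^ 4 * (6 * (m ^ 2 - 1)) := by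
      have hm10' : (0:ℝ) ≤ m - 1 := by linarith
      have h1 : (m - 1) ^ 2 ≤ m ^ 2 := by nlinarith
      have h2 : 4 * m ^ 2 ≤ m ^ 4 := by nlinarith [sq_nonneg m, sq_nonneg (m^2 - 4)]
      have c1 : 72 * (m - 1) ^ 3 ≤ 72 * ((m - 1) * m ^ 2) := by
        nlinarith [mul_le_mul_of_nonneg_left h1 hm10']
      have c2 : 72 * ((m - 1) * m ^ 2) ≤ 18 * ((m - 1) * m ^ 4) := by
        nlinarith [mul_le_mul_of_nonneg_left h2 hm10']
      have c3 : 18 * ((m - 1) * m ^ 4) ≤ m ^ 4 * (6 * (m ^ 2 - 1)) := by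
        nlinarith [mul_nonneg (mul_nonneg hm10' (by linarith : (0:ℝ) ≤ m - 2))
          (by positivity : (0:ℝ) ≤ 6 * m ^ 4)]
      linarith
    have hmul := mul_le_mul_of_nonneg_left hpoly (sq_nonneg ((1 - η) * ε))
    calc 2 * (m - 1) ^ 3 * ((1 - η) * ε) ^ 2
        = ((1 - η) * ε) ^ 2 * (72 * (m - 1) ^ 3) / 36 := by ring
      _ ≤ ((1 - η) * ε) ^ 2 * (m ^ 4 * (6 * (m ^ 2 - 1))) / 36 := by linarith
      _ = (ε / 6 * (1 - η)) ^ 2 * (m ^ 4 * (6 * (m ^ 2 - 1))) := by ring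
  have habs : |p i - pt i| ≤ ε / 6 * (1 - η) := by
    rw [← Real.sqrt_sq_eq_abs]
    calc Real.sqrt ((p i - pt i) ^ 2) ≤ Real.sqrt ((ε / 6 * (1 - η)) ^ 2) :=
          Real.sqrt_le_sqrt hfin
      _ = ε / 6 * (1 - η) := Real.sqrt_sq hεη0
  obtain ⟨hl, hr⟩ := abs_le.mp habs
  have hmono : ε / 6 * (1 - η) ≤ ε / 6 * (1 - pt i) :=
    mul_le_mul_of_nonneg_left (by linarith) (by linarith)
  have e1 : (1 - ε / 6) * (1 - pt i) = (1 - pt i) - ε / 6 * (1 - pt i) := by ring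
  have e2 : (1 + ε / 6) * (1 - pt i) = (1 - pt i) + ε / 6 * (1 - pt i) := by ring
  constructor
  · rw [e1]; linarith
  · rw [e2]; linarith
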